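/- Let ρ be a representation of ℤ² into SL₂(ℂ) with non-trivial image (not contained in {±I}). Then the subspace of sl₂(ℂ) fixed by Ad∘ρ of every element is one-dimensional. -/

import Mathlib

open Matrix

private lemma conj_iff_comm (A : SpecialLinearGroup (Fin 2) ℂ) (X : Matrix (Fin 2) (Fin 2) ℂ) :
    (A : Matrix (Fin 2) (Fin 2) ℂ) * (X * ((A⁻¹ : SpecialLinearGroup (Fin 2) ℂ) :
      Matrix (Fin 2) (Fin 2) ℂ)) = X ↔
    (A : Matrix (Fin 2) (Fin 2) ℂ) * X = X * (A : Matrix (Fin 2) (Fin 2) ℂ) := by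
  set B : Matrix (Fin 2) (Fin 2) ℂ := (A : Matrix (Fin 2) (Fin 2) ℂ) with hB
  set C : Matrix (Fin 2) (Fin 2) ℂ := ((A⁻¹ : SpecialLinearGroup (Fin 2) ℂ) : Matrix (Fin 2) (Fin 2) ℂ) with hC
  have hBC : B * C = 1 := by
    rw [hB, hC]
    exact congrArg Subtype.val (mul_inv_cancel A)
  have hCB : C * B = 1 := by
    rw [hB, hC]
    exact congrArg Subtype.val (inv_mul_cancel A)
  constructor
  · intro h
    calc B * X = B * (X * (C * B)) := by rw [hCB, mul_one]
    _ = (B * (X * C)) * B := by noncomm_ring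
    _ = X * B := by rw [h]
  · intro h
    calc B * (X * C) = (B * X) * C := by rw [mul_assoc]
    _ = X * (B * C) := by rw [h, mul_assoc]
    _ = X := by rw [hBC, mul_one]

private lemma scalar_SL2 (A : SpecialLinearGroup (Fin 2) ℂ)
    (hb : (A : Matrix (Fin 2) (Fin 2) ℂ) 0 1 = 0)
    (hc : (A : Matrix (Fin 2) (Fin 2) ℂ) 1 0 = 0)
    (had : (A : Matrix (Fin 2) (Fin 2) ℂ) 0 0 = (A : Matrix (Fin 2) (Fin 2) ℂ) 1 1) :
    A = 1 ∨ A = -1 := by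
  have hdet : (A : Matrix (Fin 2) (Fin 2) ℂ).det = 1 := A.2
  rw [Matrix.det_fin_two, hb, hc, had] at hdet
  have hsq : ((A : Matrix (Fin 2) (Fin 2) ℂ) 1 1) ^ 2 = 1 := by linear_combination hdet
  have h2 : (A : Matrix (Fin 2) (Fin 2) ℂ) 1 1 = 1 ∨ (A : Matrix (Fin 2) (Fin 2) ℂ) 1 1 = -1 := by
    have hf : ((A : Matrix (Fin 2) (Fin 2) ℂ) 1 1 - 1) * ((A : Matrix (Fin 2) (Fin 2) ℂ) 1 1 + 1) = 0 := by
      linear_combination hsq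
    rcases mul_eq_zero.mp hf with h | h
    · exact Or.inl (by linear_combination h)
    · exact Or.inr (by linear_combination h)
  rcases h2 with h | h
  · left
    ext i j
    fin_cases i <;> fin_cases j <;>
      simp_all [Matrix.one_apply]
  · right
    ext i j
    fin_cases i <;> fin_cases j <;>
      simp_all [Matrix.one_apply]

open Matrix in
theorem fixed_subspace_of_nontrivial_Z2_rep
    (ρ : Multiplicative (ℤ × ℤ) →* Matrix.SpecialLinearGroup (Fin 2) ℂ)
    (hnt : ¬ ∀ g, ρ g = 1 ∨ ρ g = -1) :
    Module.finrank ℂ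
      ↥((LinearMap.ker (Matrix.traceLinearMap (Fin 2) ℂ ℂ)) ⊓
        ⨅ g : Multiplicative (ℤ × ℤ),
          LinearMap.ker
            ((LinearMap.mulLeft ℂ ((ρ g : Matrix (Fin 2) (Fin 2) ℂ))).comp
                (LinearMap.mulRight ℂ (((ρ g)⁻¹ : Matrix.SpecialLinearGroup (Fin 2) ℂ) :
                  Matrix (Fin 2) (Fin 2) ℂ)) -
              LinearMap.id)) = 1 := by
  push_neg at hnt
  obtain ⟨g₀, h1, hm1⟩ := hnt
  set A : Matrix (Fin 2) (Fin 2) ℂ := (ρ g₀ : Matrix (Fin 2) (Fin 2) ℂ) with hA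
  -- membership characterization
  have mem_iff : ∀ X : Matrix (Fin 2) (Fin 2) ℂ,
      (X ∈ (LinearMap.ker (Matrix.traceLinearMap (Fin 2) ℂ ℂ)) ⊓
        ⨅ g : Multiplicative (ℤ × ℤ),
          LinearMap.ker
            ((LinearMap.mulLeft ℂ ((ρ g : Matrix (Fin 2) (Fin 2) ℂ))).comp
                (LinearMap.mulRight ℂ (((ρ g)⁻¹ : Matrix.SpecialLinearGroup (Fin 2) ℂ) :
                  Matrix (Fin 2) (Fin 2) ℂ)) -
              LinearMap.id))
      ↔ X.trace = 0 ∧ ∀ g, (ρ g : Matrix (Fin 2) (Fin 2) ℂ) * X = X * (ρ g : Matrix (Fin 2) (Fin 2) ℂ) := by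
    intro X
    simp only [Submodule.mem_inf, Submodule.mem_iInf, LinearMap.mem_ker, LinearMap.sub_apply,
      LinearMap.comp_apply, LinearMap.mulLeft_apply, LinearMap.mulRight_apply, LinearMap.id_apply,
      sub_eq_zero, traceLinearMap_apply]
    exact and_congr Iff.rfl (forall_congr' fun g => conj_iff_comm (ρ g) X)
  -- the distinguished vector
  set X₀ : Matrix (Fin 2) (Fin 2) ℂ := (2 : ℂ) • A - A.trace • (1 : Matrix (Fin 2) (Fin 2) ℂ) with hX₀
  -- nonscalarity of A
  have hns : ¬ (A 0 1 = 0 ∧ A 1 0 = 0 ∧ A 0 0 = A 1 1) := by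
    rintro ⟨hb, hc, had⟩
    rcases scalar_SL2 (ρ g₀) hb hc had with h | h
    · exact h1 h
    · exact hm1 h
  have hX₀ne : X₀ ≠ 0 := by
    intro h
    apply hns
    have e := fun i j => congrFun (congrFun h i) j
    simp only [hX₀, Matrix.sub_apply, Matrix.smul_apply, Matrix.one_apply, Matrix.zero_apply,
      Matrix.trace_fin_two, smul_eq_mul] at e
    have e01 := e 0 1; have e10 := e 1 0; have e00 := e 0 0; have e11 := e 1 1
    norm_num at e01 e10 e00 e11
    refine ⟨e01, e10, by linear_combination e00⟩
  -- commuting with all ρ g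
  have hcomm : ∀ g, (ρ g : Matrix (Fin 2) (Fin 2) ℂ) * A = A * (ρ g : Matrix (Fin 2) (Fin 2) ℂ) := by
    intro g
    have : ρ g * ρ g₀ = ρ g₀ * ρ g := by rw [← _root_.map_mul, ← _root_.map_mul, mul_comm]
    have := congrArg (fun M : SpecialLinearGroup (Fin 2) ℂ => (M : Matrix (Fin 2) (Fin 2) ℂ)) this
    simpa [SpecialLinearGroup.coe_mul] using this
  -- the submodule equals the span
  have hset : ((LinearMap.ker (Matrix.traceLinearMap (Fin 2) ℂ ℂ)) ⊓
        ⨅ g : Multiplicative (ℤ × ℤ),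
          LinearMap.ker
            ((LinearMap.mulLeft ℂ ((ρ g : Matrix (Fin 2) (Fin 2) ℂ))).comp
                (LinearMap.mulRight ℂ (((ρ g)⁻¹ : Matrix.SpecialLinearGroup (Fin 2) ℂ) :
                  Matrix (Fin 2) (Fin 2) ℂ)) -
              LinearMap.id)) = Submodule.span ℂ {X₀} := by
    apply le_antisymm
    · intro X hX
      rw [mem_iff] at hX
      obtain ⟨htr, hcX⟩ := hX
      have hAX : A * X = X * A := (hcX g₀)
      rw [Matrix.trace_fin_two] at htr
      -- entry equations
      have e := fun i j => congrFun (congrFun hAX i) j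
      simp only [Matrix.mul_apply, Fin.sum_univ_two] at e
      have e00 := e 0 0; have e01 := e 0 1; have e10 := e 1 0
      rw [Submodule.mem_span_singleton]
      -- case analysis
      by_cases hb : A 0 1 ≠ 0
      · refine ⟨X 0 1 / (2 * A 0 1), ?_⟩
        ext i j
        fin_cases i <;> fin_cases j <;>
          ( simp only [hX₀, Matrix.smul_apply, Matrix.sub_apply, Matrix.one_apply,
              Matrix.trace_fin_two, smul_eq_mul]
            norm_num
            field_simp )
        · linear_combination e01 - A 0 1 * htr
        · linear_combination -e00
        · linear_combination -e01 - A 0 1 * htr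
      push_neg at hb
      by_cases hc : A 1 0 ≠ 0
      · refine ⟨X 1 0 / (2 * A 1 0), ?_⟩
        ext i j
        fin_cases i <;> fin_cases j <;>
          ( simp only [hX₀, Matrix.smul_apply, Matrix.sub_apply, Matrix.one_apply,
              Matrix.trace_fin_two, smul_eq_mul]
            norm_num
            field_simp )
        · linear_combination -e10 - A 1 0 * htr
        · linear_combination e00
        · linear_combination e10 - A 1 0 * htr
      push_neg at hc
      have had : A 0 0 - A 1 1 ≠ 0 := by
        intro h
        exact hns ⟨hb, hc, by linear_combination h⟩
      refine ⟨X 0 0 / (A 0 0 - A 1 1), ?_⟩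
      have hX01 : X 0 1 = 0 := by
        have h' : X 0 1 * (A 0 0 - A 1 1) = 0 := by
          linear_combination e01 + (X 0 0 - X 1 1) * hb
        rcases mul_eq_zero.mp h' with h | h
        · exact h
        · exact absurd h had
      have hX10 : X 1 0 = 0 := by
        have h' : X 1 0 * (A 0 0 - A 1 1) = 0 := by
          linear_combination -e10 + (X 0 0 - X 1 1) * hc
        rcases mul_eq_zero.mp h' with h | h
        · exact h
        · exact absurd h had
      ext i j
      fin_cases i <;> fin_cases j <;>
        ( simp only [hX₀, Matrix.smul_apply, Matrix.sub_apply, Matrix.one_apply,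
            Matrix.trace_fin_two, smul_eq_mul]
          norm_num
          field_simp )
      · ring
      · rw [hb, hX01]; ring
      · rw [hc, hX10]; ring
      · linear_combination (A 1 1 - A 0 0) * htr
    · rw [Submodule.span_singleton_le_iff_mem, mem_iff]
      constructor
      · simp [hX₀, Matrix.trace_fin_two, Matrix.one_apply]
        ring
      · intro g
        have hg := hcomm g
        simp only [hX₀]
        rw [mul_sub, sub_mul, Matrix.mul_smul, Matrix.smul_mul, hg, Matrix.mul_smul,
          Matrix.smul_mul, mul_one, one_mul]
  rw [hset]
  exact finrank_span_singleton hX₀ne
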